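/- Let a < b be real numbers and let f : ℝ → ℝ be differentiable at every point of the open interval (a, b), with derivative f'(x) = -(1 + (f x)²) for all x ∈ (a, b). Then b - a ≤ π. -/

import Mathlib

/-- Any real solution of the Riccati equation `f' = -(1 + f²)` on an open
interval `(a, b)` forces `b - a ≤ π`. -/
theorem riccati_real_blowup (a b : ℝ) (hab : a < b) (f : ℝ → ℝ)
    (hf : ∀ x ∈ Set.Ioo a b, HasDerivAt f (-(1 + (f x) ^ 2)) x) :
    b - a ≤ Real.pi := by
  set g : ℝ → ℝ := fun x => Real.arctan (f x) + x with hg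
  have hgd : ∀ x ∈ Set.Ioo a b, HasDerivAt g 0 x := by
    intro x hx
    have h1 : HasDerivAt (fun y => Real.arctan (f y))
        ((1 / (1 + (f x) ^ 2)) * (-(1 + (f x) ^ 2))) x :=
      (Real.hasDerivAt_arctan (f x)).comp x (hf x hx)
    have h2 : HasDerivAt g ((1 / (1 + (f x) ^ 2)) * (-(1 + (f x) ^ 2)) + 1) x :=
      h1.add (hasDerivAt_id x)
    have hne : (1 : ℝ) + (f x) ^ 2 ≠ 0 := by positivity
    have : (1 / (1 + (f x) ^ 2)) * (-(1 + (f x) ^ 2)) + 1 = 0 := by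
      field_simp; ring
    rwa [this] at h2
  -- g is constant on (a,b)
  have hconst : ∀ x ∈ Set.Ioo a b, ∀ y ∈ Set.Ioo a b, x < y → g x = g y := by
    intro x hx y hy hxy
    have hsub : Set.Icc x y ⊆ Set.Ioo a b := by
      intro z hz
      exact ⟨lt_of_lt_of_le hx.1 hz.1, lt_of_le_of_lt hz.2 hy.2⟩
    have hcont : ContinuousOn g (Set.Icc x y) := fun z hz =>
      ((hgd z (hsub hz)).continuousAt).continuousWithinAt
    have hderiv : ∀ z ∈ Set.Ioo x y, HasDerivAt g 0 z := fun z hz =>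
      hgd z (hsub ⟨hz.1.le, hz.2.le⟩)
    obtain ⟨c, _, hc⟩ := exists_hasDerivAt_eq_slope g (fun _ => 0) hxy hcont hderiv
    have := hc.symm
    simp only [div_eq_zero_iff] at this
    rcases this with h | h
    · linarith
    · linarith
  -- conclude
  by_contra h
  push_neg at h
  set δ := (b - a - Real.pi) / 3 with hδ
  have hδpos : 0 < δ := by have := Real.pi_pos; simp [hδ]; linarith
  have hx : a + δ ∈ Set.Ioo a b := by
    constructor <;> [linarith; (have := Real.pi_pos; linarith)]
  have hy : b - δ ∈ Set.Ioo a b := by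
    constructor <;> [(have := Real.pi_pos; linarith); linarith]
  have hxy : a + δ < b - δ := by have := Real.pi_pos; linarith
  have heq := hconst _ hx _ hy hxy
  have h1 := Real.arctan_lt_pi_div_two (f (a + δ))
  have h2 := Real.neg_pi_div_two_lt_arctan (f (b - δ))
  have : (b - δ) - (a + δ) = Real.arctan (f (a + δ)) - Real.arctan (f (b - δ)) := by
    simp only [hg] at heq; linarith
  linarith
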